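/- Let k ≥ 2 and let P_k ⊆ E be the vertex set of the regular 2k-gon inscribed in the unit circle, P_k = {p_j = (cos(jπ/k), sin(jπ/k)) : 0 ≤ j < 2k}. Then every configuration of k closed disks covering P_k has maximum radius at least sin(π/(2k)); that is, for all c : Fin k → E and r : Fin k → ℝ with P_k ⊆ ⋃ i, Metric.closedBall (c i) (r i), there exists i with r i ≥ sin(π/(2k)). -/

import Mathlib

open Metric Real

noncomputable section

abbrev E : Type := EuclideanSpace ℝ (Fin 2)

/-- The `j`-th vertex of the regular `2k`-gon inscribed in the unit circle. -/
noncomputable def gonPt (k j : ℕ) : E := !₂[Real.cos (j * π / k), Real.sin (j * π / k)]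

/-- The vertex set of the regular `2k`-gon inscribed in the unit circle. -/
def Pgon (k : ℕ) : Set E := {x | ∃ j < 2 * k, x = gonPt k j}

lemma sin_le_sin_of_mem (a x : ℝ) (ha : 0 ≤ a) (hx1 : a ≤ x) (hx2 : x ≤ π - a) :
    Real.sin a ≤ Real.sin x := by
  have hpi := Real.pi_pos
  have ha2 : a ≤ π / 2 := by linarith
  rcases le_total x (π / 2) with h | h
  · exact Real.strictMonoOn_sin.monotoneOn ⟨by linarith, ha2⟩ ⟨by linarith, h⟩ hx1
  · rw [← Real.sin_pi_sub x]
    exact Real.strictMonoOn_sin.monotoneOn ⟨by linarith, ha2⟩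
      ⟨by linarith, by linarith⟩ (by linarith)

lemma dist_gonPt (k : ℕ) (hk : 0 < k) (a b : ℕ) :
    dist (gonPt k a) (gonPt k b) = 2 * |Real.sin (((a : ℝ) - b) * π / (2 * k))| := by
  have hk' : (k : ℝ) ≠ 0 := Nat.cast_ne_zero.mpr hk.ne'
  set A : ℝ := a * π / k with hA
  set B : ℝ := b * π / k with hB
  set θ : ℝ := ((a : ℝ) - b) * π / (2 * k) with hθ
  have hAB : A - B = 2 * θ := by rw [hA, hB, hθ]; field_simp
  rw [EuclideanSpace.dist_eq]
  have h1 : ∑ i, dist (gonPt k a i) (gonPt k b i) ^ 2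
      = (Real.cos A - Real.cos B) ^ 2 + (Real.sin A - Real.sin B) ^ 2 := by
    simp [Fin.sum_univ_two, gonPt, Real.dist_eq, sq_abs, hA, hB]
  have hc : Real.cos (A - B) = 1 - 2 * Real.sin θ ^ 2 := by
    rw [hAB, Real.cos_two_mul, Real.cos_sq']
    ring
  have h2 : (Real.cos A - Real.cos B) ^ 2 + (Real.sin A - Real.sin B) ^ 2
      = 4 * Real.sin θ ^ 2 := by
    have h3 := Real.cos_sub A B
    nlinarith [Real.sin_sq_add_cos_sq A, Real.sin_sq_add_cos_sq B]
  rw [h1, h2, show (4:ℝ) * Real.sin θ ^ 2 = (2 * |Real.sin θ|) ^ 2 by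
    rw [mul_pow, sq_abs]; ring]
  exact Real.sqrt_sq (by positivity)

theorem gon_cover_needs_radius_sin
    (k : ℕ) (hk : 2 ≤ k) (c : Fin k → E) (r : Fin k → ℝ)
    (hcov : Pgon k ⊆ ⋃ i, Metric.closedBall (c i) (r i)) :
    ∃ i, Real.sin (π / (2 * k)) ≤ r i := by
  have hk0 : 0 < k := by omega
  have hkR : (0:ℝ) < k := by exact_mod_cast hk0
  have hpi := Real.pi_pos
  have hmem : ∀ j : Fin (2 * k), ∃ i, gonPt k j ∈ Metric.closedBall (c i) (r i) := by
    intro j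
    have := hcov (show gonPt k j ∈ Pgon k from ⟨j.1, j.2, rfl⟩)
    simpa [Set.mem_iUnion] using this
  choose f hf using hmem
  have hcard : Fintype.card (Fin k) < Fintype.card (Fin (2 * k)) := by
    simp only [Fintype.card_fin]; omega
  obtain ⟨j₁, j₂, hne, heq⟩ := Fintype.exists_ne_map_eq_of_card_lt f hcard
  have hvne : (j₁ : ℕ) ≠ (j₂ : ℕ) := fun h => hne (Fin.ext h)
  wlog hlt : (j₂ : ℕ) < (j₁ : ℕ) generalizing j₁ j₂
  · exact this j₂ j₁ hne.symm heq.symm hvne.symm (by omega)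
  refine ⟨f j₂, ?_⟩
  have h1 := hf j₁
  rw [heq] at h1
  have h2 := hf j₂
  rw [Metric.mem_closedBall] at h1 h2
  have hd : dist (gonPt k j₁) (gonPt k j₂) ≤ 2 * r (f j₂) := by
    calc dist (gonPt k j₁) (gonPt k j₂)
        ≤ dist (gonPt k j₁) (c (f j₂)) + dist (gonPt k j₂) (c (f j₂)) :=
          dist_triangle_right _ _ _
      _ ≤ 2 * r (f j₂) := by linarith
  rw [dist_gonPt k hk0 j₁ j₂] at hd
  set θ : ℝ := (((j₁ : ℕ) : ℝ) - ((j₂ : ℕ) : ℝ)) * π / (2 * k) with hθ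
  set u : ℝ := π / (2 * k) with hu
  have hu0 : 0 < u := by positivity
  have hd1 : (1 : ℝ) ≤ ((j₁ : ℕ) : ℝ) - ((j₂ : ℕ) : ℝ) := by
    have : (j₂ : ℕ) + 1 ≤ (j₁ : ℕ) := hlt
    have h' : ((j₂ : ℕ) : ℝ) + 1 ≤ ((j₁ : ℕ) : ℝ) := by exact_mod_cast this
    linarith
  have hd2 : ((j₁ : ℕ) : ℝ) - ((j₂ : ℕ) : ℝ) ≤ 2 * k - 1 := by
    have : (j₁ : ℕ) ≤ 2 * k - 1 := by omega
    have h' : ((j₁ : ℕ) : ℝ) ≤ 2 * (k : ℝ) - 1 := by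
      have h2k : ((j₁ : ℕ) : ℝ) + 1 ≤ ((2 * k : ℕ) : ℝ) := by exact_mod_cast j₁.2
      push_cast at h2k
      linarith
    have hb : (0:ℝ) ≤ ((j₂ : ℕ) : ℝ) := Nat.cast_nonneg _
    linarith
  have hθd : θ = (((j₁ : ℕ) : ℝ) - ((j₂ : ℕ) : ℝ)) * u := by
    rw [hθ, hu]; ring
  have hθ1 : u ≤ θ := by
    rw [hθd]
    nlinarith [mul_nonneg (sub_nonneg.mpr hd1) hu0.le]
  have hθ2 : θ ≤ π - u := by
    have hπu : π = 2 * k * u := by rw [hu]; field_simp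
    rw [hθd, hπu]
    nlinarith [mul_nonneg (sub_nonneg.mpr hd2) hu0.le]
  have hs : Real.sin u ≤ Real.sin θ := sin_le_sin_of_mem u θ hu0.le hθ1 hθ2
  have hs0 : 0 ≤ Real.sin u := Real.sin_nonneg_of_nonneg_of_le_pi hu0.le (by
    rw [hu]; rw [div_le_iff₀ (by positivity)]; nlinarith)
  have habs : Real.sin u ≤ |Real.sin θ| := le_trans hs (le_abs_self _)
  calc Real.sin (π / (2 * k)) = Real.sin u := rfl
    _ ≤ |Real.sin θ| := habs
    _ ≤ r (f j₂) := by linarith
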